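/- For the cycle C_n on n ≥ 3 vertices, the 2-t-Grundy domination number satisfies γ_gr^{t,2}(C_n) = n. -/

import Mathlib

/-- A sequence `S` of distinct vertices is a generalized `k`-Grundy sequence with respect to
neighborhood assignments `N₁` (where the footprinted vertex must lie relative to the new
vertex) and `N₂` (the neighborhoods of earlier vertices that must contain the footprinted
vertex fewer than `k` times): for each position `i` there is a vertex `u ∈ N₁ (S i)` that
belongs to `N₂ w` for fewer than `k` of the vertices `w` preceding position `i`. -/
def IsGrundySeq {V : Type*} (k : ℕ) (N₁ N₂ : V → Set V) (S : List V) : Prop :=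
  S.Nodup ∧ ∀ (i : ℕ) (hi : i < S.length),
    ∃ u ∈ N₁ (S.get ⟨i, hi⟩), {w | w ∈ S.take i ∧ u ∈ N₂ w}.ncard < k

/-- The length of a longest generalized `k`-Grundy sequence. -/
noncomputable def grundyVal {V : Type*} (k : ℕ) (N₁ N₂ : V → Set V) : ℕ :=
  sSup {m | ∃ S : List V, IsGrundySeq k N₁ N₂ S ∧ S.length = m}

/-- The closed neighborhood `N[v]` of a vertex. -/
def closedNbhd {V : Type*} (G : SimpleGraph V) (v : V) : Set V :=
  insert v (G.neighborSet v)

/-- The `k`-Grundy domination number `γ_gr^k(G)`. -/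
noncomputable def kGrundy {V : Type*} (G : SimpleGraph V) (k : ℕ) : ℕ :=
  grundyVal k (closedNbhd G) (closedNbhd G)

/-- The `k`-`L`-Grundy domination number `γ_gr^{L,k}(G)`. -/
noncomputable def kLGrundy {V : Type*} (G : SimpleGraph V) (k : ℕ) : ℕ :=
  grundyVal k (closedNbhd G) G.neighborSet

/-- The `k`-`Z`-Grundy domination number `γ_gr^{Z,k}(G)`. -/
noncomputable def kZGrundy {V : Type*} (G : SimpleGraph V) (k : ℕ) : ℕ :=
  grundyVal k G.neighborSet (closedNbhd G)

/-- The `k`-`t`-Grundy domination number `γ_gr^{t,k}(G)`. -/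
noncomputable def ktGrundy {V : Type*} (G : SimpleGraph V) (k : ℕ) : ℕ :=
  grundyVal k G.neighborSet G.neighborSet

lemma mem_take_finRange {n i : ℕ} {w : Fin n} (hw : w ∈ (List.finRange n).take i) :
    (w : ℕ) < i := by
  rw [List.mem_take_iff_getElem] at hw
  obtain ⟨j, hj, hjw⟩ := hw
  have hwj : (w : ℕ) = j := by
    rw [← hjw, List.getElem_finRange]; simp
  omega

/-- For `n ≥ 3`, `γ_gr^{t,2}(C_n) = n`. -/
theorem ktGrundy_cycleGraph (n : ℕ) (hn : 3 ≤ n) :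
    ktGrundy (SimpleGraph.cycleGraph n) 2 = n := by
  obtain ⟨m, rfl⟩ : ∃ m, n = m + 2 := ⟨n - 2, by omega⟩
  unfold ktGrundy grundyVal
  apply le_antisymm
  · apply csSup_le
    · exact ⟨0, [], ⟨List.nodup_nil, by simp⟩, rfl⟩
    · rintro m' ⟨S, ⟨hnd, -⟩, rfl⟩
      simpa using hnd.length_le_card
  · apply le_csSup
    · refine ⟨m + 2, ?_⟩
      rintro m' ⟨S, ⟨hnd, -⟩, rfl⟩
      simpa using hnd.length_le_card
    · refine ⟨List.finRange (m + 2), ⟨List.nodup_finRange _, ?_⟩, by simp⟩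
      intro i hi
      rw [List.length_finRange] at hi
      set v : Fin (m + 2) := ⟨i, hi⟩ with hv
      refine ⟨v + 1, ?_, ?_⟩
      · rw [List.get_finRange, SimpleGraph.cycleGraph_neighborSet]
        simp
        exact Or.inr rfl
      · have hsub : {w | w ∈ (List.finRange (m + 2)).take i ∧
            v + 1 ∈ (SimpleGraph.cycleGraph (m + 2)).neighborSet w} ⊆ {v + 1 + 1} := by
          rintro w ⟨hw1, hw2⟩
          rw [SimpleGraph.cycleGraph_neighborSet] at hw2
          rcases hw2 with h | h
          · -- v + 1 = w - 1, so w = v + 2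
            have : w = v + 1 + 1 := by
              rw [h]; exact (sub_add_cancel w 1).symm
            simp [this]
          · -- v + 1 = w + 1, so w = v, contradiction with w ∈ take i
            have hwv : w = v := by
              have := add_right_cancel h.symm
              exact this
            have := mem_take_finRange hw1
            rw [hwv] at this
            simp [hv] at this
        calc ({w | w ∈ (List.finRange (m + 2)).take i ∧
              v + 1 ∈ (SimpleGraph.cycleGraph (m + 2)).neighborSet w}).ncard
            ≤ ({v + 1 + 1} : Set (Fin (m + 2))).ncard :=
              Set.ncard_le_ncard hsub (Set.finite_singleton _)
          _ = 1 := Set.ncard_singleton _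
          _ < 2 := one_lt_two
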